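/- Every smooth group homomorphism from ℂ* to ℂ* is of the form g ↦ |g|^(b+ic)·(g/|g|)^v for some real numbers b, c and integer v. -/

import Mathlib

noncomputable section

open Complex Finset

/-- `g^μ` for `μ = (b + c·i, v) ∈ ℂ × ℤ`: `|g|^(b+ci) · (g/|g|)^v`. -/
noncomputable def cpw (b c : ℝ) (v : ℤ) (g : ℂ) : ℂ :=
  ((‖g‖ : ℂ) ^ ((b : ℂ) + (c : ℂ) * Complex.I)) * (g / (‖g‖ : ℂ)) ^ v

/-- `g^μ` where `μ` is encoded as a triple `(b, c, v) : ℝ × ℝ × ℤ`. -/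
noncomputable def cpwT (t : ℝ × ℝ × ℤ) (g : ℂ) : ℂ := cpw t.1 t.2.1 t.2.2 g

/-- The product `μ₂μ₁ = (b₁b₂, b₁c₂ + c₁v₂, v₁v₂)` in the ring `𝓡 ≅ ℂ × ℤ`. -/
def rmul (μ₂ μ₁ : ℝ × ℝ × ℤ) : ℝ × ℝ × ℤ :=
  (μ₁.1 * μ₂.1, μ₁.1 * μ₂.2.1 + μ₁.2.1 * (μ₂.2.2 : ℝ), μ₁.2.2 * μ₂.2.2)

/-- The identity element of `𝓡`. -/
def rone : ℝ × ℝ × ℤ := (1, 0, 1)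

/-- `⟨α, β⟩ = Σₖ αᵏ βᵏ ∈ 𝓡`. -/
def rinner {n : ℕ} (α β : Fin n → ℝ × ℝ × ℤ) : ℝ × ℝ × ℤ :=
  ∑ k, rmul (α k) (β k)

/-- `χ^α(g₁, …, gₙ) = ∏ₖ gₖ^{αᵏ}`. -/
noncomputable def chi {n : ℕ} (α : Fin n → ℝ × ℝ × ℤ) (g : Fin n → ℂ) : ℂ :=
  ∏ k, cpwT (α k) (g k)

open Manifold

lemma one_param (φ : ℝ → ℂ) (hd : Differentiable ℝ φ) (h0 : φ 0 = 1)
    (hmul : ∀ s t, φ (s + t) = φ s * φ t) (t : ℝ) :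
    φ t = Complex.exp (t * deriv φ 0) := by
  set μ := deriv φ 0 with hμ
  have hμ0 : HasDerivAt φ μ 0 := (hd 0).hasDerivAt
  have key : ∀ t : ℝ, HasDerivAt φ (φ t * μ) t := by
    intro t
    have h1 : HasDerivAt (fun s => φ (t + s)) (φ t * μ) 0 := by
      have he : (fun s => φ (t + s)) = fun s => φ t * φ s := funext fun s => hmul t s
      rw [he]
      simpa using hμ0.const_mul (φ t)
    have h3 : deriv φ t = φ t * μ := by
      have := h1.deriv
      rwa [deriv_comp_const_add, add_zero] at this
    exact h3 ▸ (hd t).hasDerivAt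
  set h : ℝ → ℂ := fun s => φ s * Complex.exp (-(s * μ)) with hh
  have hder : ∀ s : ℝ, HasDerivAt h 0 s := by
    intro s
    have hi : HasDerivAt (fun s : ℝ => -((s : ℂ) * μ)) (-μ) s := by
      have : HasDerivAt (fun s : ℝ => ((s : ℂ) * μ)) μ s := by
        simpa using (HasDerivAt.ofReal_comp (hasDerivAt_id s)).mul_const μ
      exact this.neg
    have he : HasDerivAt (fun s : ℝ => Complex.exp (-((s : ℂ) * μ)))
        (Complex.exp (-((s : ℂ) * μ)) * (-μ)) s := hi.cexp
    have := (key s).mul he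
    have hz : φ s * μ * Complex.exp (-(s * μ)) + φ s * (Complex.exp (-(s * μ)) * -μ) = 0 := by ring
    rw [hz] at this
    exact this
  have hc : ∀ s : ℝ, h s = h 0 := by
    intro s
    exact is_const_of_deriv_eq_zero (fun x => ((hder x).differentiableAt : _))
      (fun x => (hder x).deriv) s 0
  have := hc t
  simp only [hh, Complex.ofReal_zero, zero_mul, neg_zero, Complex.exp_zero, mul_one, h0] at this
  have hne : Complex.exp (-(t * μ)) ≠ 0 := Complex.exp_ne_zero _
  field_simp [Complex.exp_neg] at this ⊢
  rw [Complex.exp_neg, mul_inv_eq_one₀ (Complex.exp_ne_zero _)] at this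
  exact this

/-- exp as a map to units -/
noncomputable def expU (z : ℂ) : ℂˣ := Units.mk0 (Complex.exp z) (Complex.exp_ne_zero z)

lemma expU_add (z w : ℂ) : expU (z + w) = expU z * expU w := by
  ext; simp [expU, Complex.exp_add]

theorem every_smooth_endomorphism_eq_cpw (f : ℂˣ →* ℂˣ)
    (hf : ContMDiff 𝓘(ℝ, ℂ) 𝓘(ℝ, ℂ) (⊤ : ℕ∞) (fun g : ℂˣ => f g)) :
    ∃ (b c : ℝ) (v : ℤ), ∀ g : ℂˣ, ((f g : ℂˣ) : ℂ) = cpw b c v (g : ℂ) := by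
  -- F : ℂ → ℂ, the lift through exp
  set F : ℂ → ℂ := fun z => ((f (expU z) : ℂˣ) : ℂ) with hFdef
  have hexpU : ContMDiff 𝓘(ℝ, ℂ) 𝓘(ℝ, ℂ) (⊤ : ℕ∞) expU := by
    apply ContMDiff.of_comp_isOpenEmbedding Units.isOpenEmbedding_val
    have : (Units.val : ℂˣ → ℂ) ∘ expU = Complex.exp := rfl
    rw [this, contMDiff_iff_contDiff]
    exact Complex.contDiff_exp
  have hFsm := ((Units.contMDiff_val.comp hf).comp hexpU).contDiff
  have hFd : Differentiable ℝ F := hFsm.differentiable (by simp)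
  have hFmul : ∀ z w, F (z + w) = F z * F w := by
    intro z w; simp only [hFdef, expU_add, map_mul, Units.val_mul]
  have hF0 : F 0 = 1 := by
    have : expU 0 = 1 := by ext; simp [expU]
    simp [hFdef, this]
  have hFper : F (2 * Real.pi * I) = 1 := by
    have : expU (2 * Real.pi * I) = 1 := by ext; simp [expU, Complex.exp_two_pi_mul_I]
    simp [hFdef, this]
  -- radial and angular one-parameter subgroups
  set φ : ℝ → ℂ := fun t => F t with hφdef
  set ψ : ℝ → ℂ := fun t => F (t * I) with hψdef
  have hφd : Differentiable ℝ φ := hFd.comp (Complex.ofRealCLM.differentiable)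
  have hψd : Differentiable ℝ ψ :=
    hFd.comp ((Complex.ofRealCLM.smulRight I).differentiable)
  have hφ : ∀ t, φ t = Complex.exp (t * deriv φ 0) := by
    refine one_param φ hφd (by simp [hφdef, hF0]) (fun s t => ?_)
    simp only [hφdef]; push_cast; rw [hFmul]
  have hψ : ∀ t, ψ t = Complex.exp (t * deriv ψ 0) := by
    refine one_param ψ hψd (by simp [hψdef, hF0]) (fun s t => ?_)
    simp only [hψdef]; push_cast; rw [add_mul, hFmul]
  set μ := deriv φ 0
  set ν := deriv ψ 0
  -- ν = v * I
  have hν : ∃ v : ℤ, ν = v * I := by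
    have h1 : Complex.exp ((2 * Real.pi : ℝ) * ν) = 1 := by
      rw [← hψ (2 * Real.pi)]
      simpa [hψdef] using hFper
    rw [Complex.exp_eq_one_iff] at h1
    obtain ⟨n, hn⟩ := h1
    refine ⟨n, ?_⟩
    have hπ : ((2 * Real.pi : ℝ) : ℂ) ≠ 0 := by
      simp [Real.pi_ne_zero]
    field_simp at hn
    -- hn : 2 * π * ν = n * (2 * π * I)
    have : ((2 * Real.pi : ℝ) : ℂ) * ν = ((2 * Real.pi : ℝ) : ℂ) * (n * I) := by
      push_cast at hn ⊢; linear_combination hn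
    exact mul_left_cancel₀ hπ this
  obtain ⟨v, hv⟩ := hν
  refine ⟨μ.re, μ.im, v, fun g => ?_⟩
  -- decompose g
  have hg : (g : ℂ) ≠ 0 := g.ne_zero
  set z := Complex.log (g : ℂ) with hz
  have hgz : expU z = g := by
    ext; simp [expU, hz, Complex.exp_log hg]
  have hfg : ((f g : ℂˣ) : ℂ) = F z := by simp only [hFdef, hgz]
  have hzsplit : z = (z.re : ℂ) + (z.im : ℂ) * I := (Complex.re_add_im z).symm
  have hFz : F z = φ z.re * ψ z.im := by
    rw [hφdef, hψdef]
    simp only []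
    rw [← hFmul, ← hzsplit]
  have habs : ‖(g : ℂ)‖ ≠ 0 := norm_ne_zero_iff.mpr hg
  have hre : z.re = Real.log ‖(g : ℂ)‖ := Complex.log_re _
  have him : z.im = Complex.arg (g : ℂ) := Complex.log_im _
  rw [hfg, hFz, hφ, hψ, hv, cpw]
  congr 1
  · -- |g|^μ
    rw [Complex.cpow_def_of_ne_zero (by exact_mod_cast habs)]
    rw [← Complex.ofReal_log (norm_nonneg _)]
    rw [Complex.re_add_im μ, hre]
  · -- (g/|g|)^v
    have hdiv : (g : ℂ) / (‖(g : ℂ)‖ : ℂ) = Complex.exp (Complex.arg (g : ℂ) * I) := by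
      rw [div_eq_iff (by exact_mod_cast habs), mul_comm]
      exact (Complex.norm_mul_exp_arg_mul_I (g : ℂ)).symm
    rw [hdiv, ← Complex.exp_int_mul, him]
    ring_nf
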